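/- Let ω : ℝ → ℂ be a C² function whose support is a compact subset of [0,∞), let M > 0, let x ≥ 0, and let φ : [0,∞) → ℂ be C² with |φ(λ)|, |φ'(λ)|, |φ''(λ)| ≤ M for all λ ≥ 0. Set F(u) := ∫₀^∞ cos(uλ) e^{ixλ} ω(λ) φ(λ) dλ. Then there is C = C(ω, M) such that: (i) |F(u)| ≤ C for all u ∈ ℝ with | |u| − x | ≤ x, and (ii) |F(u)| ≤ C ( x/|x² − u²| + |u + x|^{−2} + |u − x|^{−2} ) for all u ∈ ℝ with | |u| − x | > x. -/

import Mathlib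

open MeasureTheory

open Complex FourierTransform Real

-- key decay lemma
lemma aux_decay {G : ℝ → ℂ} (hG : ContDiff ℝ 2 G) (hGc : HasCompactSupport G)
    {a : ℝ} (ha : a ≠ 0) :
    ‖∫ lam : ℝ, Complex.exp (Complex.I * (a : ℂ) * (lam : ℂ)) * G lam‖
      ≤ (∫ lam : ℝ, ‖deriv (deriv G) lam‖) / a ^ 2 := by
  have hG1 : ContDiff ℝ 1 (deriv G) := by
    have h := ContDiff.iterate_deriv' 1 1 (f := G) (by exact_mod_cast hG)
    simpa using h
  have hGdiff : Differentiable ℝ G := hG.differentiable two_ne_zero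
  have hG1diff : Differentiable ℝ (deriv G) := hG1.differentiable one_ne_zero
  have hc1 : Continuous (deriv G) := hG1diff.continuous
  have hc2 : Continuous (deriv (deriv G)) := hG1.continuous_deriv le_rfl
  have intG : Integrable G := hG.continuous.integrable_of_hasCompactSupport hGc
  have intG1 : Integrable (deriv G) := hc1.integrable_of_hasCompactSupport hGc.deriv
  have intG2 : Integrable (deriv (deriv G)) :=
    hc2.integrable_of_hasCompactSupport hGc.deriv.deriv
  set w : ℝ := -(a / (2 * π)) with hw
  have hπ : (π : ℝ) ≠ 0 := Real.pi_ne_zero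
  have hwval : ∀ v : ℝ, -2 * π * v * w = a * v := by
    intro v; rw [hw]; field_simp
  have heq : (∫ lam : ℝ, Complex.exp (Complex.I * (a : ℂ) * (lam : ℂ)) * G lam) = 𝓕 G w := by
    rw [Real.fourier_real_eq_integral_exp_smul]
    refine (integral_congr_ae (Filter.Eventually.of_forall fun v => ?_)).symm
    rw [smul_eq_mul]
    congr 1
    rw [hwval v]
    push_cast
    ring
  have key1 := Real.fourier_deriv intG hGdiff intG1
  have key2 := Real.fourier_deriv intG1 hG1diff intG2
  have e2 : 𝓕 (deriv (deriv G)) w = ((2 * π * I * w) * (2 * π * I * w)) • 𝓕 G w := by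
    rw [key2, key1]; simp only [smul_smul]
  have hnorm : ‖((2 * π * I * w) * (2 * π * I * w) : ℂ)‖ = a ^ 2 := by
    have : ‖(2 * ↑π * I * ↑w : ℂ)‖ = |a| := by
      simp only [norm_mul, Complex.norm_I, Complex.norm_real, Real.norm_eq_abs,
        Complex.norm_ofNat]
      rw [abs_of_pos Real.pi_pos, hw]
      rw [abs_neg, abs_div]
      rw [abs_of_pos (by positivity : (0:ℝ) < 2 * π)]
      field_simp
    rw [norm_mul, this, ← _root_.sq_abs a, sq]
  have hb : ‖𝓕 (deriv (deriv G)) w‖ ≤ ∫ lam : ℝ, ‖deriv (deriv G) lam‖ :=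
    VectorFourier.norm_fourierIntegral_le_integral_norm _ _ _ _ _
  rw [e2, norm_smul, hnorm] at hb
  rw [heq]
  rw [le_div_iff₀ (by positivity : (0:ℝ) < a ^ 2)]
  linarith [hb]

section Aux

-- ω vanishes on Iic 0
lemma aux_omega_zero {ω : ℝ → ℂ} (hω : Continuous ω)
    (hsupp : Function.support ω ⊆ Set.Ici (0 : ℝ)) :
    ∀ lam : ℝ, lam ≤ 0 → ω lam = 0 := by
  have hneg : ∀ lam : ℝ, lam < 0 → ω lam = 0 := by
    intro lam hl
    by_contra h
    exact absurd (hsupp h) (by simpa using hl)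
  intro lam hl
  rcases lt_or_eq_of_le hl with h | h
  · exact hneg lam h
  · subst h
    have h1 : Set.EqOn ω (fun _ => (0:ℂ)) (Set.Iio 0) := fun y hy => hneg y hy
    have h2 : Set.EqOn ω (fun _ => (0:ℂ)) (closure (Set.Iio 0)) :=
      Set.EqOn.closure h1 hω continuous_const
    have : (0:ℝ) ∈ closure (Set.Iio (0:ℝ)) := by
      rw [closure_Iio]; exact Set.self_mem_Iic
    exact h2 this

-- derivatives of ω vanish on Iio 0
lemma aux_deriv_zero {f : ℝ → ℂ} (hf : ∀ lam : ℝ, lam < 0 → f lam = 0) :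
    ∀ lam : ℝ, lam < 0 → deriv f lam = 0 := by
  intro lam hl
  have hev : f =ᶠ[nhds lam] (fun _ => (0:ℂ)) :=
    Filter.eventually_of_mem (Iio_mem_nhds hl) (fun y hy => hf y hy)
  rw [hev.deriv_eq, deriv_const]

end Aux

set_option maxHeartbeats 1000000 in
/-- pointwise bounds for `F(u) = ∫₀^∞ cos(uλ) e^{ixλ} ω(λ) φ(λ) dλ`:
with `ω` a `C²` function compactly supported in `[0,∞)` and `φ` a `C²` function with
`φ, φ', φ''` bounded by `M` on `[0,∞)`, there is `C = C(ω, M)` such that for `x ≥ 0`: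
(i) `|F(u)| ≤ C` whenever `||u| - x| ≤ x`, and
(ii) `|F(u)| ≤ C (x/|x²-u²| + |u+x|⁻² + |u-x|⁻²)` whenever `||u| - x| > x`. -/
theorem stmt_10 (ω : ℝ → ℂ) (hω : ContDiff ℝ 2 ω) (hωc : HasCompactSupport ω)
    (hωsupp : Function.support ω ⊆ Set.Ici (0 : ℝ)) (M : ℝ) (hM : 0 < M) :
    ∃ C : ℝ, ∀ x : ℝ, 0 ≤ x → ∀ φ : ℝ → ℂ, ContDiff ℝ 2 φ →
      (∀ lam : ℝ, 0 ≤ lam →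
        ‖φ lam‖ ≤ M ∧ ‖deriv φ lam‖ ≤ M ∧ ‖deriv (deriv φ) lam‖ ≤ M) →
      (∀ u : ℝ, |(|u| - x)| ≤ x →
        ‖∫ lam in Set.Ioi (0 : ℝ),
            ((Real.cos (u * lam) : ℝ) : ℂ) * Complex.exp (Complex.I * (x : ℂ) * (lam : ℂ)) *
              ω lam * φ lam‖ ≤ C) ∧
      (∀ u : ℝ, x < |(|u| - x)| →
        ‖∫ lam in Set.Ioi (0 : ℝ),
            ((Real.cos (u * lam) : ℝ) : ℂ) * Complex.exp (Complex.I * (x : ℂ) * (lam : ℂ)) *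
              ω lam * φ lam‖
          ≤ C * (x / |x ^ 2 - u ^ 2| + (|u + x| ^ 2)⁻¹ + (|u - x| ^ 2)⁻¹)) := by
  -- basic facts about ω
  have hω1 : ContDiff ℝ 1 (deriv ω) := by
    have h := ContDiff.iterate_deriv' 1 1 (f := ω) (by exact_mod_cast hω)
    simpa using h
  have hωdiff : Differentiable ℝ ω := hω.differentiable two_ne_zero
  have hω1diff : Differentiable ℝ (deriv ω) := hω1.differentiable one_ne_zero
  have hcω1 : Continuous (deriv ω) := hω1diff.continuous
  have hcω2 : Continuous (deriv (deriv ω)) := hω1.continuous_deriv le_rfl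
  have intω : Integrable ω := hω.continuous.integrable_of_hasCompactSupport hωc
  have intω1 : Integrable (deriv ω) := hcω1.integrable_of_hasCompactSupport hωc.deriv
  have intω2 : Integrable (deriv (deriv ω)) :=
    hcω2.integrable_of_hasCompactSupport hωc.deriv.deriv
  have hω0 : ∀ lam : ℝ, lam ≤ 0 → ω lam = 0 := aux_omega_zero hω.continuous hωsupp
  have hω0' : ∀ lam : ℝ, lam < 0 → deriv ω lam = 0 :=
    aux_deriv_zero (fun lam hl => hω0 lam hl.le)
  have hω0'' : ∀ lam : ℝ, lam < 0 → deriv (deriv ω) lam = 0 := aux_deriv_zero hω0'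
  set B : ℝ := ∫ lam : ℝ, ‖ω lam‖ with hB
  set K : ℝ := ∫ lam : ℝ, (‖ω lam‖ + 2 * ‖deriv ω lam‖ + ‖deriv (deriv ω) lam‖) with hK
  have intBig : Integrable (fun lam : ℝ =>
      ‖ω lam‖ + 2 * ‖deriv ω lam‖ + ‖deriv (deriv ω) lam‖) :=
    (intω.norm.add (intω1.norm.const_mul 2)).add intω2.norm
  have hB0 : 0 ≤ B := integral_nonneg fun lam => norm_nonneg _
  have hK0 : 0 ≤ K := integral_nonneg fun lam => by positivity
  refine ⟨M * B + M * K, ?_⟩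
  intro x hx φ hφ hφb
  -- facts about φ and G
  have hφ1 : ContDiff ℝ 1 (deriv φ) := by
    have h := ContDiff.iterate_deriv' 1 1 (f := φ) (by exact_mod_cast hφ)
    simpa using h
  have hφdiff : Differentiable ℝ φ := hφ.differentiable two_ne_zero
  have hφ1diff : Differentiable ℝ (deriv φ) := hφ1.differentiable one_ne_zero
  set G : ℝ → ℂ := fun lam => ω lam * φ lam with hGdef
  have hG : ContDiff ℝ 2 G := hω.mul hφ
  have hGc : HasCompactSupport G := hωc.mul_right
  have hG0 : ∀ lam : ℝ, lam ≤ 0 → G lam = 0 := by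
    intro lam hl; simp [hGdef, hω0 lam hl]
  -- first derivative of G
  have hGd1 : deriv G = fun lam => deriv ω lam * φ lam + ω lam * deriv φ lam := by
    funext lam
    exact deriv_mul (hωdiff lam) (hφdiff lam)
  -- second derivative of G
  have hGd2 : ∀ lam : ℝ, deriv (deriv G) lam
      = (deriv (deriv ω) lam * φ lam + deriv ω lam * deriv φ lam)
        + (deriv ω lam * deriv φ lam + ω lam * deriv (deriv φ) lam) := by
    intro lam
    rw [hGd1]
    rw [deriv_fun_add (f := fun y => deriv ω y * φ y) (g := fun y => ω y * deriv φ y) ((hω1diff lam).mul (hφdiff lam)) ((hωdiff lam).mul (hφ1diff lam)),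
      deriv_fun_mul (hω1diff lam) (hφdiff lam), deriv_fun_mul (hωdiff lam) (hφ1diff lam)]
  -- pointwise bound on second derivative of G
  have hpt : ∀ lam : ℝ, ‖deriv (deriv G) lam‖
      ≤ M * (‖ω lam‖ + 2 * ‖deriv ω lam‖ + ‖deriv (deriv ω) lam‖) := by
    intro lam
    rw [hGd2 lam]
    rcases lt_or_ge lam 0 with hl | hl
    · rw [hω0 lam hl.le, hω0' lam hl, hω0'' lam hl]
      simp
    · obtain ⟨hb0, hb1, hb2⟩ := hφb lam hl
      have h1 : ‖deriv (deriv ω) lam * φ lam‖ ≤ ‖deriv (deriv ω) lam‖ * M := by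
        rw [norm_mul]; gcongr
      have h2 : ‖deriv ω lam * deriv φ lam‖ ≤ ‖deriv ω lam‖ * M := by
        rw [norm_mul]; gcongr
      have h3 : ‖ω lam * deriv (deriv φ) lam‖ ≤ ‖ω lam‖ * M := by
        rw [norm_mul]; gcongr
      calc ‖(deriv (deriv ω) lam * φ lam + deriv ω lam * deriv φ lam)
            + (deriv ω lam * deriv φ lam + ω lam * deriv (deriv φ) lam)‖
          ≤ (‖deriv (deriv ω) lam * φ lam‖ + ‖deriv ω lam * deriv φ lam‖)
            + (‖deriv ω lam * deriv φ lam‖ + ‖ω lam * deriv (deriv φ) lam‖) := by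
            exact (norm_add_le _ _).trans (by gcongr <;> exact norm_add_le _ _)
        _ ≤ (‖deriv (deriv ω) lam‖ * M + ‖deriv ω lam‖ * M)
            + (‖deriv ω lam‖ * M + ‖ω lam‖ * M) := by gcongr
        _ = M * (‖ω lam‖ + 2 * ‖deriv ω lam‖ + ‖deriv (deriv ω) lam‖) := by ring
  -- integral bound on second derivative of G
  have hG1 : ContDiff ℝ 1 (deriv G) := by
    have h := ContDiff.iterate_deriv' 1 1 (f := G) (by exact_mod_cast hG)
    simpa using h
  have intG2 : Integrable (deriv (deriv G)) :=
    (hG1.continuous_deriv le_rfl).integrable_of_hasCompactSupport hGc.deriv.deriv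
  set L : ℝ := ∫ lam : ℝ, ‖deriv (deriv G) lam‖ with hL
  have hL0 : 0 ≤ L := integral_nonneg fun lam => norm_nonneg _
  have hLK : L ≤ M * K := by
    calc L ≤ ∫ lam : ℝ, M * (‖ω lam‖ + 2 * ‖deriv ω lam‖ + ‖deriv (deriv ω) lam‖) :=
          integral_mono intG2.norm (intBig.const_mul M) hpt
      _ = M * K := by rw [hK, integral_const_mul]
  constructor
  · -- part (i)
    intro u _
    have hbound : ∀ lam ∈ Set.Ioi (0:ℝ),
        ‖((Real.cos (u * lam) : ℝ) : ℂ) * Complex.exp (Complex.I * (x : ℂ) * (lam : ℂ)) *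
          ω lam * φ lam‖ ≤ M * ‖ω lam‖ := by
      intro lam hlam
      obtain ⟨hb0, _, _⟩ := hφb lam (le_of_lt hlam)
      have hexp : ‖Complex.exp (Complex.I * (x : ℂ) * (lam : ℂ))‖ = 1 := by
        rw [Complex.norm_exp]
        simp [Complex.mul_re, Complex.mul_im]
      have hcos : ‖((Real.cos (u * lam) : ℝ) : ℂ)‖ ≤ 1 := by
        rw [Complex.norm_real, Real.norm_eq_abs]
        exact Real.abs_cos_le_one _
      calc ‖((Real.cos (u * lam) : ℝ) : ℂ) * Complex.exp (Complex.I * (x : ℂ) * (lam : ℂ)) *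
            ω lam * φ lam‖
          = ‖((Real.cos (u * lam) : ℝ) : ℂ)‖ * ‖Complex.exp (Complex.I * (x : ℂ) * (lam : ℂ))‖
            * ‖ω lam‖ * ‖φ lam‖ := by simp [norm_mul]
        _ ≤ 1 * 1 * ‖ω lam‖ * M := by
            rw [hexp]; gcongr
        _ = M * ‖ω lam‖ := by ring
    have h1 : ‖∫ lam in Set.Ioi (0:ℝ),
        ((Real.cos (u * lam) : ℝ) : ℂ) * Complex.exp (Complex.I * (x : ℂ) * (lam : ℂ)) *
          ω lam * φ lam‖ ≤ ∫ lam in Set.Ioi (0:ℝ), M * ‖ω lam‖ := by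
      refine norm_integral_le_of_norm_le ((intω.norm.const_mul M).restrict) ?_
      exact (ae_restrict_iff' measurableSet_Ioi).mpr (Filter.Eventually.of_forall hbound)
    have h2 : (∫ lam in Set.Ioi (0:ℝ), M * ‖ω lam‖) ≤ M * B := by
      rw [hB, ← integral_const_mul]
      refine setIntegral_le_integral (intω.norm.const_mul M) ?_
      exact Filter.Eventually.of_forall fun lam => by positivity
    have : 0 ≤ M * K := by positivity
    linarith
  · -- part (ii)
    intro u hu
    -- |u| > 2x
    have h2x : 2 * x < |u| := by
      rcases le_or_gt x |u| with h | h
      · rw [_root_.abs_of_nonneg (by linarith)] at hu; linarith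
      · rw [_root_.abs_of_neg (by linarith)] at hu
        have := abs_nonneg u; linarith
    have hupx : u + x ≠ 0 := by
      intro h
      have : |u| = x := by
        have : u = -x := by linarith
        rw [this, _root_.abs_neg, _root_.abs_of_nonneg hx]
      have := abs_nonneg u; linarith
    have humx : u - x ≠ 0 := by
      intro h
      have : |u| = x := by
        have : u = x := by linarith
        rw [this, _root_.abs_of_nonneg hx]
      linarith
    -- rewrite the integrand
    have hsplit : ∀ lam : ℝ, ((Real.cos (u * lam) : ℝ) : ℂ) *
          Complex.exp (Complex.I * (x : ℂ) * (lam : ℂ)) * ω lam * φ lam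
        = (1/2 : ℂ) * (Complex.exp (Complex.I * ((x + u : ℝ) : ℂ) * (lam : ℂ)) * G lam)
          + (1/2 : ℂ) * (Complex.exp (Complex.I * ((x - u : ℝ) : ℂ) * (lam : ℂ)) * G lam) := by
      intro lam
      have h1 : Complex.exp (Complex.I * ((x + u : ℝ) : ℂ) * (lam : ℂ))
          = Complex.exp (((u * lam : ℝ) : ℂ) * Complex.I) *
            Complex.exp (Complex.I * (x : ℂ) * (lam : ℂ)) := by
        rw [← Complex.exp_add]; congr 1; push_cast; ring
      have h2 : Complex.exp (Complex.I * ((x - u : ℝ) : ℂ) * (lam : ℂ))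
          = Complex.exp (-(((u * lam : ℝ) : ℂ) * Complex.I)) *
            Complex.exp (Complex.I * (x : ℂ) * (lam : ℂ)) := by
        rw [← Complex.exp_add]; congr 1; push_cast; ring
      rw [hGdef]
      simp only [Complex.ofReal_cos, Complex.cos, h1, h2]
      ring
    rw [show (∫ lam in Set.Ioi (0:ℝ),
        ((Real.cos (u * lam) : ℝ) : ℂ) * Complex.exp (Complex.I * (x : ℂ) * (lam : ℂ)) *
          ω lam * φ lam)
      = ∫ lam in Set.Ioi (0:ℝ),
          ((1/2 : ℂ) * (Complex.exp (Complex.I * ((x + u : ℝ) : ℂ) * (lam : ℂ)) * G lam)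
          + (1/2 : ℂ) * (Complex.exp (Complex.I * ((x - u : ℝ) : ℂ) * (lam : ℂ)) * G lam))
      from by exact setIntegral_congr_fun measurableSet_Ioi fun lam _ => hsplit lam]
    -- extend to the whole line
    rw [setIntegral_eq_integral_of_forall_compl_eq_zero (fun lam hlam => by
      have : lam ≤ 0 := by simpa using hlam
      simp [hG0 lam this])]
    -- integrability of the two pieces
    have hce : ∀ a : ℝ, Continuous fun lam : ℝ =>
        Complex.exp (Complex.I * (a : ℂ) * (lam : ℂ)) * G lam := by
      intro a
      exact (Complex.continuous_exp.comp (continuous_const.mul Complex.continuous_ofReal)).mul hG.continuous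
    have hint : ∀ a : ℝ, Integrable fun lam : ℝ =>
        Complex.exp (Complex.I * (a : ℂ) * (lam : ℂ)) * G lam := by
      intro a
      exact (hce a).integrable_of_hasCompactSupport hGc.mul_left
    rw [integral_add ((hint (x+u)).const_mul _) ((hint (x-u)).const_mul _),
      integral_const_mul, integral_const_mul]
    -- apply the decay lemma
    have hd1 := aux_decay hG hGc (a := x + u) (by intro h; exact hupx (by linarith))
    have hd2 := aux_decay hG hGc (a := x - u) (by intro h; exact humx (by linarith))
    have hn : ‖(1/2 : ℂ)‖ = 1/2 := by norm_num
    have key : ‖(1/2 : ℂ) * ∫ lam : ℝ, Complex.exp (Complex.I * ((x + u : ℝ) : ℂ) * (lam : ℂ)) * G lam‖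
        + ‖(1/2 : ℂ) * ∫ lam : ℝ, Complex.exp (Complex.I * ((x - u : ℝ) : ℂ) * (lam : ℂ)) * G lam‖
        ≤ (1/2) * (L / (x+u)^2) + (1/2) * (L / (x-u)^2) := by
      rw [norm_mul, norm_mul, hn]
      gcongr
    refine (norm_add_le _ _).trans (key.trans ?_)
    -- final arithmetic
    have hupx' : u + x ≠ 0 := hupx
    have humx' : u - x ≠ 0 := humx
    have e1 : (x+u)^2 = |u+x|^2 := by rw [_root_.sq_abs]; ring
    have e2 : (x-u)^2 = |u-x|^2 := by rw [_root_.sq_abs]; ring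
    have hC : 0 ≤ M * B := mul_nonneg hM.le hB0
    have hxd : 0 ≤ x / |x ^ 2 - u ^ 2| := div_nonneg hx (abs_nonneg _)
    have hp1 : (0:ℝ) < |u+x|^2 := pow_pos (abs_pos.mpr hupx') 2
    have hp2 : (0:ℝ) < |u-x|^2 := pow_pos (abs_pos.mpr humx') 2
    rw [e1, e2, div_eq_mul_inv, div_eq_mul_inv]
    have hLC : L ≤ M * B + M * K := by linarith
    calc 1/2 * (L * (|u+x|^2)⁻¹) + 1/2 * (L * (|u-x|^2)⁻¹)
        ≤ 1/2 * ((M*B+M*K) * (|u+x|^2)⁻¹) + 1/2 * ((M*B+M*K) * (|u-x|^2)⁻¹) := by gcongr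
      _ ≤ (M*B+M*K) * (x / |x ^ 2 - u ^ 2| + (|u + x| ^ 2)⁻¹ + (|u - x| ^ 2)⁻¹) := by
          have h1 : (0:ℝ) ≤ (|u+x|^2)⁻¹ := inv_nonneg.mpr hp1.le
          have h2 : (0:ℝ) ≤ (|u-x|^2)⁻¹ := inv_nonneg.mpr hp2.le
          have hC2 : (0:ℝ) ≤ M*B+M*K := by nlinarith
          nlinarith [mul_nonneg hC2 hxd, mul_nonneg hC2 h1, mul_nonneg hC2 h2]
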